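/- Suppose installs and moves strictly alternate starting with an install, wbit = parity(installs), zbit = parity(moves). If an install occurs at time t and the next move after t occurs at time m > t and is preceded by an observation time o < m at which wbit o ≠ zbit o and zbit is constant on [o', m) for some o' ≤ o coinciding with the mover's read of zbit, then o > t. (The mover's read of wbit happens after the install it transfers.) -/

import Mathlib

/-- parity of the number of events of `S` occurring strictly before time `t`. -/
def parity (S : Finset ℕ) (t : ℕ) : ℕ := (S.filter (fun s => s < t)).card % 2


-- lower bound: #moves before u ≤ #installs before u
lemma low_aux (I M : Finset ℕ)
    (hfirst : ∀ m ∈ M, ∃ i ∈ I, i < m)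
    (hMI : ∀ m₁ ∈ M, ∀ m₂ ∈ M, m₁ < m₂ → ∃ i ∈ I, m₁ < i ∧ i < m₂)
    (u : ℕ) :
    (M.filter (fun s => s < u)).card ≤ (I.filter (fun s => s < u)).card := by
  classical
  apply Finset.card_le_card_of_injOn (fun s => Nat.findGreatest (· ∈ I) s)
  · intro s hs
    simp only [Finset.mem_coe, Finset.mem_filter] at hs ⊢
    obtain ⟨i, hiI, his⟩ := hfirst s hs.1
    exact ⟨Nat.findGreatest_spec (le_of_lt his) hiI,
      lt_of_le_of_lt (Nat.findGreatest_le s) hs.2⟩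
  · intro a ha b hb hab
    simp only [Finset.coe_filter, Set.mem_setOf_eq] at ha hb
    have hab' : Nat.findGreatest (· ∈ I) a = Nat.findGreatest (· ∈ I) b := hab
    rcases lt_trichotomy a b with h | h | h
    · obtain ⟨i, hiI, hai, hib⟩ := hMI a ha.1 b hb.1 h
      have h1 : Nat.findGreatest (· ∈ I) a ≤ a := Nat.findGreatest_le a
      have h2 : i ≤ Nat.findGreatest (· ∈ I) b :=
        Nat.le_findGreatest (le_of_lt hib) hiI
      omega
    · exact h
    · obtain ⟨i, hiI, hai, hib⟩ := hMI b hb.1 a ha.1 h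
      have h1 : Nat.findGreatest (· ∈ I) b ≤ b := Nat.findGreatest_le b
      have h2 : i ≤ Nat.findGreatest (· ∈ I) a :=
        Nat.le_findGreatest (le_of_lt hib) hiI
      omega

-- upper bound: #installs before u ≤ #moves before u + 1
lemma high_aux (I M : Finset ℕ)
    (hIM : ∀ i₁ ∈ I, ∀ i₂ ∈ I, i₁ < i₂ → ∃ m ∈ M, i₁ < m ∧ m < i₂)
    (u : ℕ) :
    (I.filter (fun s => s < u)).card ≤ (M.filter (fun s => s < u)).card + 1 := by
  classical
  rcases (I.filter (fun s => s < u)).eq_empty_or_nonempty with he | hne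
  · simp [he]
  set i0 := (I.filter (fun s => s < u)).min' hne with hi0
  have hi0mem := (I.filter (fun s => s < u)).min'_mem hne
  simp only [Finset.mem_filter] at hi0mem
  have hcard : ((I.filter (fun s => s < u)).erase i0).card ≤
      (M.filter (fun s => s < u)).card := by
    apply Finset.card_le_card_of_injOn (fun s => Nat.findGreatest (· ∈ M) s)
    · intro s hs
      have hsmem := Finset.mem_of_mem_erase hs
      have hsne := Finset.ne_of_mem_erase hs
      simp only [Finset.mem_coe, Finset.mem_filter] at hsmem ⊢
      have hlt : i0 < s :=
        lt_of_le_of_ne (Finset.min'_le _ s (by simp [Finset.mem_filter, hsmem]))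
          (Ne.symm hsne)
      obtain ⟨m', hm'M, h1, h2⟩ := hIM i0 hi0mem.1 s hsmem.1 hlt
      exact ⟨Nat.findGreatest_spec (le_of_lt h2) hm'M,
        lt_of_le_of_lt (Nat.findGreatest_le s) hsmem.2⟩
    · intro a ha b hb hab
      simp only [Finset.coe_erase, Set.mem_diff, Finset.coe_filter,
        Set.mem_setOf_eq, Set.mem_singleton_iff] at ha hb
      have hab' : Nat.findGreatest (· ∈ M) a = Nat.findGreatest (· ∈ M) b := hab
      rcases lt_trichotomy a b with h | h | h
      · obtain ⟨m', hm'M, h1, h2⟩ := hIM a ha.1.1 b hb.1.1 h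
        have h1' : Nat.findGreatest (· ∈ M) a ≤ a := Nat.findGreatest_le a
        have h2' : m' ≤ Nat.findGreatest (· ∈ M) b :=
          Nat.le_findGreatest (le_of_lt h2) hm'M
        omega
      · exact h
      · obtain ⟨m', hm'M, h1, h2⟩ := hIM b hb.1.1 a ha.1.1 h
        have h1' : Nat.findGreatest (· ∈ M) b ≤ b := Nat.findGreatest_le b
        have h2' : m' ≤ Nat.findGreatest (· ∈ M) a :=
          Nat.le_findGreatest (le_of_lt h2) hm'M
        omega
  have : (I.filter (fun s => s < u)).card =
      ((I.filter (fun s => s < u)).erase i0).card + 1 := by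
    rw [Finset.card_erase_of_mem (by simp [Finset.mem_filter, hi0, hi0mem])]
    have := Finset.card_pos.mpr hne
    omega
  omega

/-- The mover's read of `wbit` happens after the install it transfers: under
strict alternation starting with an install, if an install occurs at `t`, the
next move after `t` occurs at `m`, the mover observed `wbit o ≠ zbit o` at some
`o < m`, and `zbit` is constant on `[o', m)` for some `o' ≤ o` (the mover's read
of `zbit`), then `o > t`. -/
theorem stmt5 (I M : Finset ℕ) (hdisj : Disjoint I M)
    (hfirst : ∀ m ∈ M, ∃ i ∈ I, i < m)
    (hMI : ∀ m₁ ∈ M, ∀ m₂ ∈ M, m₁ < m₂ → ∃ i ∈ I, m₁ < i ∧ i < m₂)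
    (hIM : ∀ i₁ ∈ I, ∀ i₂ ∈ I, i₁ < i₂ → ∃ m ∈ M, i₁ < m ∧ m < i₂)
    (t m o : ℕ) (htI : t ∈ I) (hmM : m ∈ M) (htm : t < m)
    (hnext : ∀ u, t < u → u < m → u ∉ M)
    (hom : o < m)
    (hobs : parity I o ≠ parity M o)
    (hzconst : ∃ o', o' ≤ o ∧ ∀ u, o' ≤ u → u < m → parity M u = parity M o') :
    o > t := by
  classical
  by_contra hcon
  push_neg at hcon
  obtain ⟨o', ho'o, hconst⟩ := hzconst
  -- Step 1: no move in [o', m)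
  have hnomove : ∀ s ∈ M, s < m → s < o' := by
    intro s hsM hsm
    by_contra hge
    push_neg at hge
    rcases lt_or_eq_of_le (Nat.succ_le_of_lt hsm) with hs1 | hs1
    · -- s + 1 < m : parity flips between s and s+1, contradicting constancy
      have h1 := hconst s hge (by omega)
      have h2 := hconst (s + 1) (by omega) hs1
      have hset : M.filter (fun x => x < s + 1) = insert s (M.filter (fun x => x < s)) := by
        ext x
        simp only [Finset.mem_filter, Finset.mem_insert]
        constructor
        · rintro ⟨hx, hxl⟩
          rcases Nat.lt_or_ge x s with h | h
          · exact Or.inr ⟨hx, h⟩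
          · exact Or.inl (by omega)
        · rintro (rfl | ⟨hx, hxl⟩)
          · exact ⟨hsM, by omega⟩
          · exact ⟨hx, by omega⟩
      have hnot : s ∉ M.filter (fun x => x < s) := by simp
      have hcard : (M.filter (fun x => x < s + 1)).card =
          (M.filter (fun x => x < s)).card + 1 := by
        rw [hset, Finset.card_insert_of_notMem hnot]
      unfold parity at h1 h2
      omega
    · -- s = m - 1
      have hts : t ≤ s := by omega
      rcases lt_or_eq_of_le hts with h | h
      · exact hnext s h hsm hsM
      · exact (Finset.disjoint_left.mp hdisj htI) (h ▸ hsM)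
  -- Step 2: no moves in [o, t+1)
  have hMeq : M.filter (fun x => x < t + 1) = M.filter (fun x => x < o) := by
    ext x
    simp only [Finset.mem_filter]
    constructor
    · rintro ⟨hx, hxl⟩
      refine ⟨hx, ?_⟩
      have := hnomove x hx (by omega)
      omega
    · rintro ⟨hx, hxl⟩
      exact ⟨hx, by omega⟩
  -- Step 3: counting
  have hlow := low_aux I M hfirst hMI o
  have hAB : (M.filter (fun s => s < o)).card < (I.filter (fun s => s < o)).card := by
    unfold parity at hobs
    omega
  have hsub : insert t (I.filter (fun s => s < o)) ⊆ I.filter (fun s => s < t + 1) := by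
    intro x hx
    simp only [Finset.mem_insert, Finset.mem_filter] at hx ⊢
    rcases hx with rfl | ⟨hx, hxl⟩
    · exact ⟨htI, by omega⟩
    · exact ⟨hx, by omega⟩
  have htnot : t ∉ I.filter (fun s => s < o) := by
    simp only [Finset.mem_filter, not_and]
    intro _
    omega
  have hcard2 : (I.filter (fun s => s < o)).card + 1 ≤
      (I.filter (fun s => s < t + 1)).card := by
    have := Finset.card_le_card hsub
    rwa [Finset.card_insert_of_notMem htnot] at this
  have hhigh := high_aux I M hIM (t + 1)
  rw [hMeq] at hhigh
  omega
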